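/- Let A be a family of commuting normal operators on a finite-dimensional real inner product space n. Then each A ∈ A commutes with the transpose Aʹᵗ of every Aʹ ∈ A, and the symmetric parts S(A) = (A + Aᵗ)/2, A ∈ A, form a commuting family of symmetric operators; consequently there exists an orthogonal decomposition n = n₁ ⊕ … ⊕ n_p and real numbers a_{A,j} such that S(A)|_{n_j} = a_{A,j}·Id_{n_j} for every A ∈ A and every j. -/

import Mathlib

open scoped RealInnerProductSpace

section Aux

variable {n : Type*} [NormedAddCommGroup n] [InnerProductSpace ℝ n] [FiniteDimensional ℝ n]

lemma trace_eq_sum_inner' (T : n →ₗ[ℝ] n) :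
    LinearMap.trace ℝ n T =
      ∑ i, ⟪(stdOrthonormalBasis ℝ n) i, T ((stdOrthonormalBasis ℝ n) i)⟫ := by
  set b := stdOrthonormalBasis ℝ n
  rw [LinearMap.trace_eq_matrix_trace ℝ b.toBasis T, Matrix.trace]
  congr 1
  ext i
  rw [Matrix.diag_apply, LinearMap.toMatrix_apply, OrthonormalBasis.coe_toBasis,
    OrthonormalBasis.coe_toBasis_repr_apply, b.repr_apply_apply]

lemma eq_zero_of_trace_star_mul_self (C : n →ₗ[ℝ] n)
    (h : LinearMap.trace ℝ n (star C * C) = 0) : C = 0 := by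
  set b := stdOrthonormalBasis ℝ n
  rw [trace_eq_sum_inner'] at h
  have h' : ∀ i, ⟪b i, (star C * C) (b i)⟫ = ‖C (b i)‖ ^ 2 := by
    intro i
    rw [Module.End.mul_apply, LinearMap.star_eq_adjoint, LinearMap.adjoint_inner_right,
      real_inner_self_eq_norm_sq]
  replace h : ∑ i, ‖C (b i)‖ ^ 2 = 0 := (Finset.sum_congr rfl (fun i _ => (h' i).symm)).trans h
  have hz : ∀ i, C (b i) = 0 := by
    intro i
    have := (Finset.sum_eq_zero_iff_of_nonneg (fun i _ => by positivity)).mp h i (Finset.mem_univ i)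
    exact norm_eq_zero.mp (by nlinarith [norm_nonneg (C (b i))])
  apply b.toBasis.ext
  intro i
  simp [OrthonormalBasis.coe_toBasis, hz i]

lemma fuglede' (A B : n →ₗ[ℝ] n)
    (hA : A * star A = star A * A) (hB : B * star B = star B * B)
    (hAB : A * B = B * A) : A * star B = star B * A := by
  have hstar : star A * star B = star B * star A := by
    have := congrArg star hAB
    simpa [star_mul] using this.symm
  set C : n →ₗ[ℝ] n := A * star B - star B * A with hC
  have hCs : star C = B * star A - star A * B := by
    simp [hC, star_sub, star_mul, star_star]
  have key : LinearMap.trace ℝ n (star C * C) = 0 := by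
    have expand : star C * C =
        B * star A * (A * star B) - B * star A * (star B * A)
          - (star A * B * (A * star B) - star A * B * (star B * A)) := by
      rw [hCs, hC]; noncomm_ring
    rw [expand]
    have t1 : LinearMap.trace ℝ n (B * star A * (A * star B))
        = LinearMap.trace ℝ n (A * star A * (B * star B)) := by
      calc LinearMap.trace ℝ n (B * star A * (A * star B))
          = LinearMap.trace ℝ n (B * ((star A * A) * star B)) := by congr 1 <;> noncomm_ring
        _ = LinearMap.trace ℝ n (B * ((A * star A) * star B)) := by rw [← hA]
        _ = LinearMap.trace ℝ n ((B * A) * (star A * star B)) := by congr 1 <;> noncomm_ring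
        _ = LinearMap.trace ℝ n ((star A * star B) * (B * A)) := LinearMap.trace_mul_comm ℝ _ _
        _ = LinearMap.trace ℝ n (star A * (star B * B) * A) := by congr 1 <;> noncomm_ring
        _ = LinearMap.trace ℝ n (star A * (B * star B) * A) := by rw [← hB]
        _ = LinearMap.trace ℝ n (A * (star A * (B * star B))) :=
            (LinearMap.trace_mul_comm ℝ _ _).symm
        _ = LinearMap.trace ℝ n (A * star A * (B * star B)) := by congr 1 <;> noncomm_ring
    have t2 : LinearMap.trace ℝ n (B * star A * (star B * A))
        = LinearMap.trace ℝ n (A * star A * (B * star B)) := by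
      calc LinearMap.trace ℝ n (B * star A * (star B * A))
          = LinearMap.trace ℝ n (B * (star A * star B) * A) := by congr 1 <;> noncomm_ring
        _ = LinearMap.trace ℝ n (B * (star B * star A) * A) := by rw [hstar]
        _ = LinearMap.trace ℝ n ((B * star B) * (star A * A)) := by congr 1 <;> noncomm_ring
        _ = LinearMap.trace ℝ n ((star A * A) * (B * star B)) := LinearMap.trace_mul_comm ℝ _ _
        _ = LinearMap.trace ℝ n (A * star A * (B * star B)) := by rw [← hA]
    have t3 : LinearMap.trace ℝ n (star A * B * (A * star B))
        = LinearMap.trace ℝ n (A * star A * (B * star B)) := by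
      calc LinearMap.trace ℝ n (star A * B * (A * star B))
          = LinearMap.trace ℝ n (star A * (B * A) * star B) := by congr 1 <;> noncomm_ring
        _ = LinearMap.trace ℝ n (star A * (A * B) * star B) := by rw [← hAB]
        _ = LinearMap.trace ℝ n ((star A * A) * (B * star B)) := by congr 1 <;> noncomm_ring
        _ = LinearMap.trace ℝ n (A * star A * (B * star B)) := by rw [← hA]
    have t4 : LinearMap.trace ℝ n (star A * B * (star B * A))
        = LinearMap.trace ℝ n (A * star A * (B * star B)) := by
      calc LinearMap.trace ℝ n (star A * B * (star B * A))
          = LinearMap.trace ℝ n (star A * (B * star B) * A) := by congr 1 <;> noncomm_ring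
        _ = LinearMap.trace ℝ n (A * (star A * (B * star B))) :=
            (LinearMap.trace_mul_comm ℝ _ _).symm
        _ = LinearMap.trace ℝ n (A * star A * (B * star B)) := by congr 1 <;> noncomm_ring
    rw [map_sub, map_sub, map_sub, t1, t2, t3, t4]
    ring
  have hC0 : C = 0 := eq_zero_of_trace_star_mul_self C key
  have := sub_eq_zero.mp hC0
  exact this

end Aux

/-- A commuting family of normal operators on a finite-dimensional real inner
product space: each member commutes with the adjoints of all members, the
symmetric parts form a commuting family of symmetric operators, and there is an
orthogonal decomposition on whose pieces every symmetric part acts as a scalar. -/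
theorem stmt8 {n : Type*} [NormedAddCommGroup n] [InnerProductSpace ℝ n]
    [FiniteDimensional ℝ n]
    (𝒜 : Set (n →ₗ[ℝ] n))
    (hnormal : ∀ A ∈ 𝒜, A ∘ₗ LinearMap.adjoint A = LinearMap.adjoint A ∘ₗ A)
    (hcomm : ∀ A ∈ 𝒜, ∀ A' ∈ 𝒜, A ∘ₗ A' = A' ∘ₗ A)
    (S : (n →ₗ[ℝ] n) → (n →ₗ[ℝ] n))
    (hS : ∀ A, S A = (1/2 : ℝ) • (A + LinearMap.adjoint A)) :
    (∀ A ∈ 𝒜, ∀ A' ∈ 𝒜, A ∘ₗ LinearMap.adjoint A' = LinearMap.adjoint A' ∘ₗ A) ∧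
    (∀ A ∈ 𝒜, (S A).IsSymmetric) ∧
    (∀ A ∈ 𝒜, ∀ A' ∈ 𝒜, S A ∘ₗ S A' = S A' ∘ₗ S A) ∧
    (∃ (p : ℕ) (𝔫 : Fin p → Submodule ℝ n) (a : (n →ₗ[ℝ] n) → Fin p → ℝ),
      (∀ i j, i ≠ j → ∀ v ∈ 𝔫 i, ∀ w ∈ 𝔫 j, ⟪v, w⟫ = 0) ∧
      (⨆ j, 𝔫 j) = ⊤ ∧
      (∀ A ∈ 𝒜, ∀ j, ∀ v ∈ 𝔫 j, S A v = a A j • v)) := by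
  -- Part 1: Fuglede
  have part1 : ∀ A ∈ 𝒜, ∀ A' ∈ 𝒜, A ∘ₗ LinearMap.adjoint A' = LinearMap.adjoint A' ∘ₗ A := by
    intro A hA A' hA'
    have := fuglede' A A'
      (by simpa [LinearMap.star_eq_adjoint, Module.End.mul_eq_comp] using hnormal A hA)
      (by simpa [LinearMap.star_eq_adjoint, Module.End.mul_eq_comp] using hnormal A' hA')
      (by simpa [Module.End.mul_eq_comp] using hcomm A hA A' hA')
    simpa [LinearMap.star_eq_adjoint, Module.End.mul_eq_comp] using this
  -- Part 2: symmetric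
  have part2 : ∀ A ∈ 𝒜, (S A).IsSymmetric := by
    intro A _
    intro x y
    rw [hS]
    simp only [LinearMap.smul_apply, LinearMap.add_apply, real_inner_smul_left,
      real_inner_smul_right, inner_add_left, inner_add_right, LinearMap.adjoint_inner_left,
      LinearMap.adjoint_inner_right]
    ring
  -- Part 3: symmetric parts commute
  have part3 : ∀ A ∈ 𝒜, ∀ A' ∈ 𝒜, S A ∘ₗ S A' = S A' ∘ₗ S A := by
    intro A hA A' hA'
    have h1 : A ∘ₗ A' = A' ∘ₗ A := hcomm A hA A' hA'
    have h2 : A ∘ₗ LinearMap.adjoint A' = LinearMap.adjoint A' ∘ₗ A := part1 A hA A' hA'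
    have h3 : A' ∘ₗ LinearMap.adjoint A = LinearMap.adjoint A ∘ₗ A' :=
      part1 A' hA' A hA
    have h4 : LinearMap.adjoint A ∘ₗ LinearMap.adjoint A' =
        LinearMap.adjoint A' ∘ₗ LinearMap.adjoint A := by
      rw [← LinearMap.adjoint_comp, ← LinearMap.adjoint_comp, h1]
    rw [hS, hS]
    simp only [LinearMap.comp_smul, LinearMap.smul_comp, LinearMap.add_comp, LinearMap.comp_add,
      h1, h2, h3, h4]
    module
  refine ⟨part1, part2, part3, ?_⟩
  classical
  -- Part 4
  set T : ↥𝒜 → (n →ₗ[ℝ] n) := fun i => S i.val with hT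
  have hsym : ∀ i : ↥𝒜, (T i).IsSymmetric := fun i => part2 i.val i.2
  have hcommT : Pairwise (Function.onFun Commute T) := by
    intro i j _
    have := part3 i.val i.2 j.val j.2
    simpa [Commute, SemiconjBy, hT, Module.End.mul_eq_comp] using this
  have htop := LinearMap.IsSymmetric.iSup_iInf_eq_top_of_commute hsym hcommT
  set V : (↥𝒜 → ℝ) → Submodule ℝ n :=
    fun χ => ⨅ i, Module.End.eigenspace (T i) (χ i) with hV
  have hindep : iSupIndep V := by
    exact (LinearMap.IsSymmetric.orthogonalFamily_iInf_eigenspaces hsym).independent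
  have hfin : {χ | V χ ≠ ⊥}.Finite := WellFoundedGT.finite_ne_bot_of_iSupIndep hindep
  set Φ := hfin.toFinset with hΦ
  refine ⟨Φ.card, fun j => V ((Φ.equivFin.symm j) : ↥𝒜 → ℝ),
    fun A j => if h : A ∈ 𝒜 then ((Φ.equivFin.symm j) : ↥𝒜 → ℝ) ⟨A, h⟩ else 0, ?_, ?_, ?_⟩
  · -- orthogonality
    intro i j hij v hv w hw
    set χ := ((Φ.equivFin.symm i) : ↥𝒜 → ℝ)
    set χ' := ((Φ.equivFin.symm j) : ↥𝒜 → ℝ)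
    have hne : χ ≠ χ' := by
      intro h
      apply hij
      have : (Φ.equivFin.symm i) = (Φ.equivFin.symm j) := Subtype.ext h
      simpa using congrArg Φ.equivFin this
    obtain ⟨k, hk⟩ := Function.ne_iff.mp hne
    have hvk : v ∈ Module.End.eigenspace (T k) (χ k) := by
      exact (Submodule.mem_iInf _).mp hv k
    have hwk : w ∈ Module.End.eigenspace (T k) (χ' k) := by
      exact (Submodule.mem_iInf _).mp hw k
    rw [Module.End.mem_eigenspace_iff] at hvk hwk
    have hsymk := hsym k v w
    rw [hvk, hwk, real_inner_smul_left, real_inner_smul_right] at hsymk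
    have : (χ k - χ' k) * ⟪v, w⟫ = 0 := by ring_nf; linarith [hsymk]
    rcases mul_eq_zero.mp this with h | h
    · exact absurd (sub_eq_zero.mp h) hk
    · exact h
  · -- supremum is ⊤
    apply le_antisymm le_top
    rw [← htop]
    apply iSup_le
    intro χ
    by_cases h : V χ = ⊥
    · rw [h]; exact bot_le
    · have hmem : χ ∈ Φ := hfin.mem_toFinset.mpr h
      have : V χ = V ((Φ.equivFin.symm (Φ.equivFin ⟨χ, hmem⟩)) : ↥𝒜 → ℝ) := by
        rw [Equiv.symm_apply_apply]
      rw [this]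
      exact le_iSup (fun j => V ((Φ.equivFin.symm j) : ↥𝒜 → ℝ)) (Φ.equivFin ⟨χ, hmem⟩)
  · -- eigenvalue property
    intro A hA j v hv
    have hvA : v ∈ Module.End.eigenspace (T ⟨A, hA⟩) (((Φ.equivFin.symm j) : ↥𝒜 → ℝ) ⟨A, hA⟩) :=
      (Submodule.mem_iInf _).mp hv ⟨A, hA⟩
    rw [Module.End.mem_eigenspace_iff] at hvA
    simpa only [dif_pos hA] using hvA
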